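/- Let A ∈ {0,1}^{N×n} and let {V_i}_{i=1}^n, {U_j}_{j=1}^N be unit vectors forming a margin-m relative-bias-0 embedding of A. Let V : R^n → R^d be the linear map with V e_i = V_i. Suppose S ⊆ [n] is shattered by the family of row supports {{i : A_{ji}=1} : j ∈ [N]}, meaning for every subset C ⊆ S there is a row j with {i ∈ S : A_{ji}=1} = C. Then for any x ∈ R^n supported on S, ‖V x‖₂ ≥ m‖x‖₁. -/
import Mathlib


open RealInnerProductSpace

theorem stmt9 {N n d : ℕ} (A : Fin N → Fin n → Bool)
    (U : Fin N → EuclideanSpace ℝ (Fin d)) (V : Fin n → EuclideanSpace ℝ (Fin d))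
    (hU : ∀ j, ‖U j‖ = 1) (hV : ∀ i, ‖V i‖ = 1)
    (m : ℝ) (hm : 0 < m)
    (hpos : ∀ j i, A j i = true → m ≤ ⟪U j, V i⟫)
    (hneg : ∀ j i, A j i = false → ⟪U j, V i⟫ ≤ -m)
    (S : Finset (Fin n))
    (hshatter : ∀ C ⊆ S, ∃ j : Fin N, S.filter (fun i => A j i = true) = C)
    (x : Fin n → ℝ) (hx : ∀ i, i ∉ S → x i = 0) :
    m * ∑ i, |x i| ≤ ‖∑ i, x i • V i‖ := by
  obtain ⟨j, hj⟩ := hshatter (S.filter (fun i => 0 ≤ x i)) (S.filter_subset _)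
  have key : m * ∑ i, |x i| ≤ ⟪U j, ∑ i, x i • V i⟫ := by
    rw [inner_sum, Finset.mul_sum]
    apply Finset.sum_le_sum
    intro i _
    rw [real_inner_smul_right]
    by_cases hiS : i ∈ S
    · by_cases hxi : 0 ≤ x i
      · have hA : A j i = true := by
          have : i ∈ S.filter (fun i => A j i = true) := by
            rw [hj]; exact Finset.mem_filter.mpr ⟨hiS, hxi⟩
          exact (Finset.mem_filter.mp this).2
        have := hpos j i hA
        rw [abs_of_nonneg hxi]
        nlinarith
      · push_neg at hxi
        have hA : A j i = false := by
          by_contra h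
          simp only [Bool.not_eq_false] at h
          have hA' : A j i = true := h
          have : i ∈ S.filter (fun i => 0 ≤ x i) := by
            rw [← hj]; exact Finset.mem_filter.mpr ⟨hiS, hA'⟩
          exact absurd (Finset.mem_filter.mp this).2 (not_le.mpr hxi)
        have := hneg j i hA
        rw [abs_of_neg hxi]
        nlinarith
    · simp [hx i hiS]
  calc m * ∑ i, |x i| ≤ ⟪U j, ∑ i, x i • V i⟫ := key
    _ ≤ ‖U j‖ * ‖∑ i, x i • V i‖ := real_inner_le_norm _ _
    _ = ‖∑ i, x i • V i‖ := by rw [hU j, one_mul]
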